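/- Let L be a field, n ≥ 1, and q ≥ 2 a natural number. Suppose g, s ∈ GL_n(L) satisfy g·s·g⁻¹ = s^q. Then for every root λ (in an algebraic closure of L) of the characteristic polynomial of s there exists an integer m with 1 ≤ m ≤ n such that λ^(q^m − 1) = 1; in particular every eigenvalue of s is a root of unity. -/

import Mathlib

open Polynomial

/-- Over a field, membership in the spectrum of a matrix is equivalent to being a root of the
characteristic polynomial. -/
lemma mem_spectrum_iff_eval_charpoly {K : Type*} [Field K] {n : ℕ}
    (M : Matrix (Fin n) (Fin n) K) (μ : K) :
    μ ∈ spectrum K M ↔ M.charpoly.eval μ = 0 := by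
  have hsc : (algebraMap K (Matrix (Fin n) (Fin n) K)) μ = Matrix.scalar (Fin n) μ := rfl
  have heval : M.charpoly.eval μ = (Matrix.scalar (Fin n) μ - M).det := by
    rw [Matrix.charpoly, eval_det, Matrix.matPolyEquiv_charmatrix, Polynomial.eval_sub,
      Polynomial.eval_X, Polynomial.eval_C]
  rw [spectrum.mem_iff, hsc, Matrix.isUnit_iff_isUnit_det, isUnit_iff_ne_zero, not_not, heval]

/-- If `g s g⁻¹ = s^q` in `GL_n(L)`, then every root `λ` (in an algebraic closure of `L`)
of the characteristic polynomial of `s` satisfies `λ^(q^m − 1) = 1` for some `1 ≤ m ≤ n`;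
in particular every eigenvalue of `s` is a root of unity. -/
theorem statement_0 (L : Type) [Field L] (n q : ℕ) (hn : 1 ≤ n) (hq : 2 ≤ q)
    (g s : GL (Fin n) L)
    (h : g * s * g⁻¹ = s ^ q)
    (lam : AlgebraicClosure L)
    (hroot : Polynomial.aeval lam
      (Matrix.charpoly (s : Matrix (Fin n) (Fin n) L)) = 0) :
    ∃ m : ℕ, 1 ≤ m ∧ m ≤ n ∧ lam ^ (q ^ m - 1) = 1 := by
  classical
  let K := AlgebraicClosure L
  let f : L →+* K := algebraMap L K
  set M : Matrix (Fin n) (Fin n) K := ((s : Matrix (Fin n) (Fin n) L)).map f with hM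
  -- `lam` is in the spectrum of `M`
  have hchar : M.charpoly = ((s : Matrix (Fin n) (Fin n) L)).charpoly.map f :=
    Matrix.charpoly_map _ f
  have hrootM : M.charpoly.eval lam = 0 := by
    rw [hchar, Polynomial.eval_map, ← Polynomial.aeval_def]
    exact hroot
  have hmem : lam ∈ spectrum K M := (mem_spectrum_iff_eval_charpoly M lam).mpr hrootM
  -- the matrix `M` is a unit
  let Φ : Matrix (Fin n) (Fin n) L →+* Matrix (Fin n) (Fin n) K := (f).mapMatrix
  let G : (Matrix (Fin n) (Fin n) K)ˣ := Units.map Φ.toMonoidHom g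
  let S : (Matrix (Fin n) (Fin n) K)ˣ := Units.map Φ.toMonoidHom s
  have hSval : (S : Matrix (Fin n) (Fin n) K) = M := rfl
  have hMunit : IsUnit M := by rw [← hSval]; exact S.isUnit
  -- conjugation relation over K
  have hconj : (G : Matrix (Fin n) (Fin n) K) * M * ((G⁻¹ : _ˣ) : Matrix (Fin n) (Fin n) K)
      = M ^ q := by
    have := congrArg (Units.map Φ.toMonoidHom) h
    rw [map_mul, map_mul, map_inv, map_pow] at this
    have := congrArg (fun u : (Matrix (Fin n) (Fin n) K)ˣ => (u : Matrix (Fin n) (Fin n) K)) this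
    simp only [Units.val_mul, Units.val_pow_eq_pow_val] at this; exact this
  -- spectral mapping:  spectrum (M^q) = (·^q) '' spectrum M, and spectrum (M^q) = spectrum M
  have hq0 : 0 < q := by omega
  have hmap : spectrum K (M ^ q) = (· ^ q) '' spectrum K M :=
    spectrum.map_pow_of_pos M hq0
  have hconjspec : spectrum K (M ^ q) = spectrum K M := by
    rw [← hconj]
    exact spectrum.units_conjugate
  have himage : (· ^ q) '' spectrum K M = spectrum K M := by
    rw [← hmap, hconjspec]
  -- the spectrum is finite (contained in the roots of charpoly, which has degree n ≥ 1)
  have hcharmonic : M.charpoly.Monic := Matrix.charpoly_monic M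
  have hcharne : M.charpoly ≠ 0 := hcharmonic.ne_zero
  have hfin : (spectrum K M).Finite := by
    apply Set.Finite.subset (Polynomial.finite_setOf_isRoot hcharne)
    intro μ hμ
    exact (mem_spectrum_iff_eval_charpoly M μ).mp hμ
  -- the q-power map is a bijection of the spectrum onto itself
  have hmapsTo : Set.MapsTo (· ^ q) (spectrum K M) (spectrum K M) := by
    intro μ hμ
    rw [← himage]
    exact Set.mem_image_of_mem _ hμ
  have hsurj : Set.SurjOn (· ^ q) (spectrum K M) (spectrum K M) := by
    rw [Set.SurjOn, himage]
  have hbij : Set.BijOn (· ^ q) (spectrum K M) (spectrum K M) :=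
    (hfin.surjOn_iff_bijOn_of_mapsTo hmapsTo).mp hsurj
  have hinj : Set.InjOn (· ^ q) (spectrum K M) := hbij.injOn
  -- all iterates lam^(q^k) are in the spectrum
  have hiter : ∀ k : ℕ, lam ^ (q ^ k) ∈ spectrum K M := by
    intro k
    induction k with
    | zero => simpa using hmem
    | succ k ih =>
      have := hmapsTo ih
      simpa [← pow_mul, pow_succ] using this
  -- pigeonhole: among lam^(q^0), ..., lam^(q^n) two are equal
  have hcardroots : hfin.toFinset.card ≤ n := by
    have hsub : hfin.toFinset ⊆ M.charpoly.roots.toFinset := by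
      intro μ hμ
      rw [Set.Finite.mem_toFinset] at hμ
      rw [Multiset.mem_toFinset, Polynomial.mem_roots hcharne]
      exact (mem_spectrum_iff_eval_charpoly M μ).mp hμ
    calc hfin.toFinset.card ≤ M.charpoly.roots.toFinset.card := Finset.card_le_card hsub
      _ ≤ Multiset.card M.charpoly.roots := Multiset.toFinset_card_le _
      _ ≤ M.charpoly.natDegree := Polynomial.card_roots' _
      _ = n := by rw [Matrix.charpoly_natDegree_eq_dim]; simp
  obtain ⟨i, hi, j, hj, hij, heq⟩ :
      ∃ i ∈ Finset.range (n + 1), ∃ j ∈ Finset.range (n + 1), i ≠ j ∧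
        lam ^ (q ^ i) = lam ^ (q ^ j) := by
    apply Finset.exists_ne_map_eq_of_card_lt_of_maps_to
    · simpa using hcardroots.trans_lt (Nat.lt_succ_self n)
    · intro k _
      rw [Finset.mem_coe, Set.Finite.mem_toFinset]
      exact hiter k
  rw [Finset.mem_range] at hi hj
  -- wlog i < j
  wlog hlt : i < j generalizing i j
  · exact this j hj i hi hij.symm heq.symm (by omega)
  -- cancel the q-power map i times using injectivity
  have hcancel : ∀ i j : ℕ, j ≤ n → lam ^ (q ^ i) = lam ^ (q ^ j) → lam = lam ^ (q ^ (j - i)) := by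
    intro i
    induction i with
    | zero => intro j _ hj'; simpa using hj'
    | succ i ih =>
      intro j hjn hj'
      cases j with
      | zero => simp
      | succ j' =>
        have h1 : (lam ^ (q ^ i)) ^ q = (lam ^ (q ^ j')) ^ q := by
          rw [← pow_mul, ← pow_mul, ← pow_succ, ← pow_succ]
          exact hj'
        have h2 : lam ^ (q ^ i) = lam ^ (q ^ j') := hinj (hiter i) (hiter j') h1
        have := ih j' (by omega) h2
        simpa [Nat.succ_sub_succ] using this
  have hm := hcancel i j (by omega) heq
  refine ⟨j - i, by omega, by omega, ?_⟩
  have hlamne : lam ≠ 0 := by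
    intro h0
    have : (0 : K) ∈ spectrum K M := h0 ▸ hmem
    exact (spectrum.zero_notMem_iff K).mpr hMunit this
  have hpow : 1 ≤ q ^ (j - i) := Nat.one_le_pow _ _ (by omega)
  have hmul : lam ^ (q ^ (j - i) - 1) * lam = 1 * lam := by
    rw [one_mul, ← pow_succ]
    have he : q ^ (j - i) - 1 + 1 = q ^ (j - i) := by omega
    rw [he, ← hm]
  exact mul_right_cancel₀ hlamne hmul
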